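/- Let S = ⋃_{s=a}^{b} ({s} × [f_s..l_s]) be a nonempty 'snake-shaped' subset of ℤ², where a ≤ b, f_{s+1} ≤ f_s ≤ l_{s+1} ≤ l_s for a ≤ s ≤ b−1, and f_s ≥ l_{s+2} for a ≤ s ≤ b−2. Let M ⊆ X ⊆ [a..b] × ℤ and let φ : M → X be an injection with x <̇ φ(x) for all x ∈ M (strictly increasing). Suppose X ∩ S contains no two points comparable under <̇. Then there is an injection φ_S : M → X \ S such that for every x ∈ M, either x <̇ φ_S(x), or φ_S(x) = x and x lies below S (i.e. writing x = (x₁,x₂), one has x₂ < f_{x₁}). -/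

import Mathlib

/-- Lemma about snake-shaped sets: let `S = ⋃_{s=a}^{b} {s} × [f s .. l s]` be a
nonempty snake-shaped subset of `ℤ²`, `M ⊆ X ⊆ [a..b] × ℤ`, and let
`φ : M → X` be a strictly increasing injection. If `X ∩ S` contains no two
points comparable under the componentwise strict order, then there is an
injection `φ_S : M → X \ S` such that for every `x ∈ M`, either `x <̇ φ_S x`,
or `φ_S x = x` and `x` lies below `S`. -/
theorem stmt_7 (a b : ℤ) (hab : a ≤ b) (f l : ℤ → ℤ)
    (S : Set (ℤ × ℤ))
    (hS : S = {p : ℤ × ℤ | a ≤ p.1 ∧ p.1 ≤ b ∧ f p.1 ≤ p.2 ∧ p.2 ≤ l p.1})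
    (hSne : S.Nonempty)
    (hshape1 : ∀ s : ℤ, a ≤ s → s ≤ b - 1 →
      f (s + 1) ≤ f s ∧ f s ≤ l (s + 1) ∧ l (s + 1) ≤ l s)
    (hshape2 : ∀ s : ℤ, a ≤ s → s ≤ b - 2 → l (s + 2) ≤ f s)
    (M X : Set (ℤ × ℤ)) (hMX : M ⊆ X)
    (hXstrip : X ⊆ {p : ℤ × ℤ | a ≤ p.1 ∧ p.1 ≤ b})
    (φ : ℤ × ℤ → ℤ × ℤ)
    (hφmaps : Set.MapsTo φ M X) (hφinj : Set.InjOn φ M)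
    (hφinc : ∀ x ∈ M, x.1 < (φ x).1 ∧ x.2 < (φ x).2)
    (hincomp : ∀ x ∈ X ∩ S, ∀ y ∈ X ∩ S, ¬(x.1 < y.1 ∧ x.2 < y.2)) :
    ∃ φS : ℤ × ℤ → ℤ × ℤ,
      Set.MapsTo φS M (X \ S) ∧ Set.InjOn φS M ∧
      ∀ x ∈ M, (x.1 < (φS x).1 ∧ x.2 < (φS x).2) ∨ (φS x = x ∧ x.2 < f x.1) := by
  classical
  -- `l` is antitone on `[a..b]`
  have hl : ∀ s t : ℤ, a ≤ s → s ≤ t → t ≤ b → l t ≤ l s := by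
    intro s t hs
    refine Int.le_induction (motive := fun t _ => t ≤ b → l t ≤ l s) (m := s) ?_ ?_ t
    · exact fun _ => le_rfl
    · intro n hn ih htb
      have hs1 := hshape1 n (by linarith) (by linarith)
      have hs2 := ih (by linarith)
      linarith [hs1.2.2]
  -- key iteration fact
  have key : ∀ x, ∀ k : ℕ, (∀ j ≤ k, φ^[j] x ∈ M) →
      φ^[k+1] x ∈ X ∧ x.1 < (φ^[k+1] x).1 ∧ x.2 < (φ^[k+1] x).2 := by
    intro x k
    induction k with
    | zero =>
      intro h
      have hx : x ∈ M := by simpa using h 0 le_rfl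
      simpa using ⟨hφmaps hx, hφinc x hx⟩
    | succ k ih =>
      intro h
      have hM : φ^[k+1] x ∈ M := h (k+1) le_rfl
      have ihh := ih (fun j hj => h j (by omega))
      have hinc := hφinc _ hM
      rw [show k + 1 + 1 = (k+1) + 1 from rfl, Function.iterate_succ_apply']
      exact ⟨hφmaps hM, by omega, by omega⟩
  set Blocked : ℤ × ℤ → Prop :=
    fun x => ∃ k : ℕ, (∀ j ≤ k, φ^[j] x ∈ M) ∧ φ^[k+1] x ∈ S with hB
  -- blocked points lie below S
  have below : ∀ x ∈ M, Blocked x → x.2 < f x.1 := by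
    intro x hx ⟨k, hk, hkS⟩
    have hkey := key x k hk
    obtain ⟨hpX, h1, h2⟩ := hkey
    set p := φ^[k+1] x with hp
    have hpS : a ≤ p.1 ∧ p.1 ≤ b ∧ f p.1 ≤ p.2 ∧ p.2 ≤ l p.1 := by
      rw [hS] at hkS; exact hkS
    have hxstrip := hXstrip (hMX hx)
    have hll : l p.1 ≤ l x.1 := hl x.1 p.1 hxstrip.1 (le_of_lt h1) hpS.2.1
    by_contra hc
    push_neg at hc
    have hxS : x ∈ S := by
      rw [hS]; exact ⟨hxstrip.1, hxstrip.2, hc, by linarith [hpS.2.2.2]⟩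
    exact hincomp x ⟨hMX hx, hxS⟩ p ⟨hpX, hkS⟩ ⟨h1, h2⟩
  refine ⟨fun x => if Blocked x then x else φ x, ?_, ?_, ?_⟩
  · intro x hx
    by_cases hbx : Blocked x
    · simp only [hbx, if_true]
      refine ⟨hMX hx, ?_⟩
      have := below x hx hbx
      rw [hS]
      intro hxS
      exact absurd hxS.2.2.1 (by linarith)
    · simp only [hbx, if_false]
      refine ⟨hφmaps hx, fun hφxS => hbx ?_⟩
      exact ⟨0, fun j hj => by interval_cases j; simpa using hx, by simpa using hφxS⟩
  · intro x hx y hy hxy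
    by_cases hbx : Blocked x <;> by_cases hby : Blocked y <;>
      simp only [hbx, hby, if_true, if_false] at hxy
    · exact hxy
    · -- x blocked, y not; φ y = x blocked
      exfalso
      obtain ⟨k, hk, hkS⟩ := hbx
      apply hby
      refine ⟨k + 1, ?_, ?_⟩
      · intro j hj
        match j with
        | 0 => simpa using hy
        | j + 1 =>
          rw [Function.iterate_succ_apply, ← hxy]
          exact hk j (by omega)
      · rw [show k + 1 + 1 = (k+1) + 1 from rfl, Function.iterate_succ_apply, ← hxy]
        exact hkS
    · exfalso
      obtain ⟨k, hk, hkS⟩ := hby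
      apply hbx
      refine ⟨k + 1, ?_, ?_⟩
      · intro j hj
        match j with
        | 0 => simpa using hx
        | j + 1 =>
          rw [Function.iterate_succ_apply, hxy]
          exact hk j (by omega)
      · rw [show k + 1 + 1 = (k+1) + 1 from rfl, Function.iterate_succ_apply, hxy]
        exact hkS
    · exact hφinj hx hy hxy
  · intro x hx
    by_cases hbx : Blocked x
    · simp only [hbx, if_true]
      exact Or.inr ⟨trivial, below x hx hbx⟩
    · simp only [hbx, if_false]
      exact Or.inl (hφinc x hx)
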